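/- Let P₀ and P₁ be probability measures on ℝ with cdfs F₀, F₁ and quantile functions F₀⁻¹, F₁⁻¹. Let J be the pushforward of Lebesgue measure on (0,1) under u ↦ (F₀⁻¹(u), F₁⁻¹(u)) (the comonotone coupling). Then J has first marginal P₀ and second marginal P₁, and J((−∞, x] × (−∞, y]) = min(F₀(x), F₁(y)) for all x, y ∈ ℝ; that is, the comonotone coupling attains the Fréchet–Hoeffding upper bound. -/

import Mathlib

open MeasureTheory Set Filter

/-- The cumulative distribution function of a measure on ℝ. -/
noncomputable def cdf (P : MeasureTheory.Measure ℝ) (y : ℝ) : ℝ := (P (Set.Iic y)).toReal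

/-- The quantile function (generalized inverse cdf) of a measure on ℝ. -/
noncomputable def quantile (P : MeasureTheory.Measure ℝ) (u : ℝ) : ℝ :=
  sInf {y : ℝ | u ≤ cdf P y}

lemma cdf_eq (P : Measure ℝ) [IsProbabilityMeasure P] : cdf P = ProbabilityTheory.cdf P := by
  ext y; rw [cdf, ProbabilityTheory.cdf_eq_real, measureReal_def]

lemma quantile_set_nonempty (P : Measure ℝ) [IsProbabilityMeasure P] {u : ℝ} (hu1 : u < 1) :
    {y : ℝ | u ≤ cdf P y}.Nonempty := by
  rw [cdf_eq]
  exact ((ProbabilityTheory.tendsto_cdf_atTop P).eventually (eventually_ge_nhds hu1)).exists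

lemma quantile_set_bddBelow (P : Measure ℝ) [IsProbabilityMeasure P] {u : ℝ} (hu0 : 0 < u) :
    BddBelow {y : ℝ | u ≤ cdf P y} := by
  rw [cdf_eq]
  obtain ⟨a, ha⟩ := eventually_atBot.mp
    ((ProbabilityTheory.tendsto_cdf_atBot P).eventually (eventually_lt_nhds hu0))
  refine ⟨a, fun z hz => ?_⟩
  by_contra h
  push_neg at h
  exact (ha z h.le).not_ge hz

lemma quantile_le_iff (P : Measure ℝ) [IsProbabilityMeasure P] {u x : ℝ} (hu0 : 0 < u)
    (hu1 : u < 1) : quantile P u ≤ x ↔ u ≤ cdf P x := by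
  have hbdd := quantile_set_bddBelow P hu0
  have hne := quantile_set_nonempty P hu1
  constructor
  · intro h
    have hmem : u ≤ cdf P (quantile P u) := by
      rw [cdf_eq] at hne hbdd ⊢
      have hsub : ∀ y, quantile P u < y → u ≤ (ProbabilityTheory.cdf P) y := by
        intro y hy
        have : sInf {y : ℝ | u ≤ (ProbabilityTheory.cdf P) y} < y := by
          rw [quantile, cdf_eq] at hy; exact hy
        obtain ⟨z, hz, hzy⟩ := (csInf_lt_iff hbdd hne).mp this
        exact le_trans hz (ProbabilityTheory.monotone_cdf P hzy.le)
      have hrc : Tendsto (fun y => (ProbabilityTheory.cdf P : ℝ → ℝ) y)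
          (nhdsWithin (quantile P u) (Ioi (quantile P u)))
          (nhds ((ProbabilityTheory.cdf P) (quantile P u))) :=
        ((ProbabilityTheory.cdf P).right_continuous (quantile P u)).tendsto.mono_left
          (nhdsWithin_mono _ Ioi_subset_Ici_self)
      refine ge_of_tendsto hrc ?_
      filter_upwards [self_mem_nhdsWithin] with y hy using hsub y hy
    refine le_trans hmem ?_
    rw [cdf_eq]
    exact ProbabilityTheory.monotone_cdf P h
  · intro h
    exact csInf_le hbdd h

lemma quantile_monotoneOn (P : Measure ℝ) [IsProbabilityMeasure P] :
    MonotoneOn (quantile P) (Ioo (0:ℝ) 1) := by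
  intro u hu v hv huv
  exact csInf_le_csInf (quantile_set_bddBelow P hu.1) (quantile_set_nonempty P hv.2)
    (fun y hy => le_trans huv hy)

lemma cdf_nonneg' (P : Measure ℝ) (x : ℝ) : 0 ≤ cdf P x := ENNReal.toReal_nonneg

lemma cdf_le_one' (P : Measure ℝ) [IsProbabilityMeasure P] (x : ℝ) : cdf P x ≤ 1 := by
  rw [cdf_eq]; exact ProbabilityTheory.cdf_le_one P x

lemma volume_inter_Iic {F : ℝ} (hF : F ≤ 1) :
    volume (Ioo (0:ℝ) 1 ∩ Iic F) = ENNReal.ofReal F := by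
  rcases lt_or_eq_of_le hF with h | h
  · have : Ioo (0:ℝ) 1 ∩ Iic F = Ioc 0 F := by
      ext u
      simp only [mem_inter_iff, mem_Ioo, mem_Iic, mem_Ioc]
      constructor
      · rintro ⟨⟨h1, _⟩, h3⟩; exact ⟨h1, h3⟩
      · rintro ⟨h1, h2⟩; exact ⟨⟨h1, lt_of_le_of_lt h2 h⟩, h2⟩
    rw [this, Real.volume_Ioc, sub_zero]
  · have : Ioo (0:ℝ) 1 ∩ Iic F = Ioo 0 1 := by
      rw [← h]; exact inter_eq_left.mpr (fun u hu => hu.2.le)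
    rw [this, Real.volume_Ioo, ← h]; norm_num

lemma restrict_map_quantile (P : Measure ℝ) [IsProbabilityMeasure P] :
    (volume.restrict (Ioo (0:ℝ) 1)).map (quantile P) = P := by
  have h0 : AEMeasurable (quantile P) (volume.restrict (Ioo (0:ℝ) 1)) :=
    aemeasurable_restrict_of_monotoneOn measurableSet_Ioo (quantile_monotoneOn P)
  have : IsFiniteMeasure ((volume.restrict (Ioo (0:ℝ) 1)).map (quantile P)) := by
    constructor
    rw [Measure.map_apply₀ h0 MeasurableSet.univ.nullMeasurableSet]
    simp [Measure.restrict_apply' measurableSet_Ioo, Real.volume_Ioo]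
  refine Measure.ext_of_Iic _ _ (fun a => ?_)
  rw [Measure.map_apply₀ h0 measurableSet_Iic.nullMeasurableSet,
    Measure.restrict_apply' measurableSet_Ioo]
  have hset : quantile P ⁻¹' Iic a ∩ Ioo 0 1 = Ioo (0:ℝ) 1 ∩ Iic (cdf P a) := by
    ext u
    simp only [mem_inter_iff, mem_preimage, mem_Iic, mem_Ioo, and_comm]
    refine and_congr_left fun hu => ?_
    exact quantile_le_iff P hu.1 hu.2
  rw [hset, volume_inter_Iic (cdf_le_one' P a), cdf, ENNReal.ofReal_toReal (measure_ne_top P _)]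

/-- The comonotone coupling is a coupling of P0 and P1 attaining the Fréchet–Hoeffding
upper bound. -/
theorem comonotone_coupling_attains_upper_bound
    (P0 P1 : Measure ℝ) [IsProbabilityMeasure P0] [IsProbabilityMeasure P1]
    (J : Measure (ℝ × ℝ))
    (hJ : J = (volume.restrict (Ioo (0:ℝ) 1)).map (fun u => (quantile P0 u, quantile P1 u))) :
    J.map Prod.fst = P0 ∧ J.map Prod.snd = P1 ∧
    ∀ x y : ℝ, (J (Iic x ×ˢ Iic y)).toReal = min (cdf P0 x) (cdf P1 y) := by
  subst hJ
  have h0 : AEMeasurable (quantile P0) (volume.restrict (Ioo (0:ℝ) 1)) :=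
    aemeasurable_restrict_of_monotoneOn measurableSet_Ioo (quantile_monotoneOn P0)
  have h1 : AEMeasurable (quantile P1) (volume.restrict (Ioo (0:ℝ) 1)) :=
    aemeasurable_restrict_of_monotoneOn measurableSet_Ioo (quantile_monotoneOn P1)
  have hq : AEMeasurable (fun u => (quantile P0 u, quantile P1 u))
      (volume.restrict (Ioo (0:ℝ) 1)) := h0.prodMk h1
  refine ⟨?_, ?_, ?_⟩
  · rw [AEMeasurable.map_map_of_aemeasurable measurable_fst.aemeasurable hq]
    exact restrict_map_quantile P0
  · rw [AEMeasurable.map_map_of_aemeasurable measurable_snd.aemeasurable hq]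
    exact restrict_map_quantile P1
  · intro x y
    rw [Measure.map_apply₀ hq ((measurableSet_Iic.prod measurableSet_Iic).nullMeasurableSet),
      Measure.restrict_apply' measurableSet_Ioo]
    have hset : (fun u => (quantile P0 u, quantile P1 u)) ⁻¹' (Iic x ×ˢ Iic y) ∩ Ioo 0 1
        = Ioo (0:ℝ) 1 ∩ Iic (min (cdf P0 x) (cdf P1 y)) := by
      ext u
      simp only [mem_inter_iff, mem_preimage, mem_prod, mem_Iic, mem_Ioo, le_min_iff, and_comm]
      refine and_congr_left fun hu => ?_
      rw [quantile_le_iff P0 hu.1 hu.2, quantile_le_iff P1 hu.1 hu.2]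
    rw [hset, volume_inter_Iic (min_le_of_left_le (cdf_le_one' P0 x)),
      ENNReal.toReal_ofReal (le_min (cdf_nonneg' P0 x) (cdf_nonneg' P1 y))]
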